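/- Let N be a positive integer, p ∈ (0,1), and ε ∈ (0, p). If K is a Binomial(N,p) random variable, then Pr{K/N ≤ p − ε} ≤ exp(− N ε² / (2 (p − ε/3)(1 − p + ε/3))); that is, ∑ over integers k with 0 ≤ k ≤ N and k ≤ N(p − ε) of C(N,k) p^k (1−p)^(N−k) is at most exp(− N ε² / (2 (p − ε/3)(1 − p + ε/3))). -/

import Mathlib

open Real

lemma tangent_ineq (t t0 : ℝ) (ht0 : 0 < t) (ht1 : t < 1) (h0 : 0 < t0) (h1 : t0 < 1) :
    1 / (t0*(1-t0)) + (2*t0-1) / (t0*(1-t0))^2 * (t - t0) ≤ 1 / (t*(1-t)) := by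
  have hc : 0 < t0*(1-t0) := by nlinarith
  have hu : 0 < t*(1-t) := by nlinarith
  have hlin : 0 ≤ (2*t0-1)*t + (1-t0)^2 := by
    nlinarith [mul_nonneg (sub_nonneg.2 ht1.le) (sq_nonneg (1-t0)), mul_nonneg ht0.le (sq_nonneg t0)]
  have key : 1 / (t*(1-t)) - (1 / (t0*(1-t0)) + (2*t0-1) / (t0*(1-t0))^2 * (t - t0))
      = ((t-t0)^2 * ((2*t0-1)*t + (1-t0)^2)) / (t*(1-t)*(t0*(1-t0))^2) := by
    have : (1:ℝ) - t ≠ 0 := by linarith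
    have : (1:ℝ) - t0 ≠ 0 := by linarith
    have : t ≠ 0 := by linarith
    have : t0 ≠ 0 := by linarith
    field_simp; ring
  have h2 : 0 ≤ ((t-t0)^2 * ((2*t0-1)*t + (1-t0)^2)) / (t*(1-t)*(t0*(1-t0))^2) := by positivity
  linarith [key ▸ h2]

lemma kl_lb (p ε : ℝ) (hp1 : p < 1) (he0 : 0 < ε) (hep : ε < p) :
    ε^2 / (2*(p-ε/3)*(1-p+ε/3))
      ≤ (p-ε)*log ((p-ε)/p) + (1-p+ε)*log ((1-p+ε)/(1-p)) := by
  set x := p - ε with hx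
  set t0 := p - ε/3 with ht0def
  have hx0 : 0 < x := by simp [hx]; linarith
  have hxp : x < p := by simp [hx]; linarith
  have hp0 : 0 < p := lt_trans he0 hep
  have ht00 : 0 < t0 := by simp [ht0def]; linarith
  have ht01 : t0 < 1 := by simp [ht0def]; linarith
  set c := t0*(1-t0) with hcdef
  have hc : 0 < c := by nlinarith
  set A := 1/c with hA
  set B := (2*t0-1)/c^2 with hB
  -- step 1 : KL = ∫ (t-x)/(t(1-t))
  have hderivF : ∀ t ∈ Set.uIcc x p, HasDerivAt (fun t => -(x * log t + (1-x) * log (1-t)))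
      ((t-x)/(t*(1-t))) t := by
    intro t ht
    rw [Set.uIcc_of_le hxp.le] at ht
    have htpos : 0 < t := lt_of_lt_of_le hx0 ht.1
    have ht1 : t < 1 := lt_of_le_of_lt ht.2 hp1
    have htne : t ≠ 0 := htpos.ne'
    have ht1ne : (1:ℝ) - t ≠ 0 := by linarith
    have h1 : HasDerivAt Real.log (1/t) t := by
      simpa [one_div] using Real.hasDerivAt_log htne
    have h2 : HasDerivAt (fun u : ℝ => 1 - u) (-1) t := (hasDerivAt_id t).const_sub 1
    have h3 : HasDerivAt (fun u : ℝ => Real.log (1-u)) ((1-t)⁻¹ * (-1)) t :=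
      (Real.hasDerivAt_log ht1ne).comp t h2
    have h4 := ((h1.const_mul x).add (h3.const_mul (1-x))).neg
    refine h4.congr_deriv ?_
    field_simp
    ring
  have hcontI : ContinuousOn (fun t : ℝ => (t-x)/(t*(1-t))) (Set.uIcc x p) := by
    rw [Set.uIcc_of_le hxp.le]
    apply ContinuousOn.div
    · fun_prop
    · fun_prop
    · intro t ht
      have htpos : 0 < t := lt_of_lt_of_le hx0 ht.1
      have ht1 : t < 1 := lt_of_le_of_lt ht.2 hp1
      nlinarith
  have hint : IntervalIntegrable (fun t : ℝ => (t-x)/(t*(1-t))) MeasureTheory.volume x p :=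
    hcontI.intervalIntegrable
  have hKL : (∫ t in x..p, (t-x)/(t*(1-t)))
      = (x*log x + (1-x)*log (1-x)) - (x*log p + (1-x)*log (1-p)) := by
    rw [intervalIntegral.integral_eq_sub_of_hasDerivAt hderivF hint]
    ring
  -- step 2 : ∫ g = ε²/(2c)  with g t = (t-x)*(A + B*(t-t0))
  have hderivG : ∀ t ∈ Set.uIcc x p,
      HasDerivAt (fun t => A*(t-x)^2/2 + B*(t-x)^3/3 - B*(ε/3)*(t-x)^2)
        ((t-x)*(A + B*(t-t0))) t := by
    intro t _
    have h1 : HasDerivAt (fun u : ℝ => u - x) 1 t := (hasDerivAt_id t).sub_const x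
    have h2 := (((h1.pow 2).const_mul A).div_const 2).add (((h1.pow 3).const_mul B).div_const 3) |>.sub ((h1.pow 2).const_mul (B*(ε/3)))
    refine h2.congr_deriv ?_
    have ht0x : t0 = x + 2*ε/3 := by rw [ht0def, hx]; ring
    rw [ht0x]
    ring
  have hintG : IntervalIntegrable (fun t : ℝ => (t-x)*(A + B*(t-t0))) MeasureTheory.volume x p := by
    apply Continuous.intervalIntegrable
    fun_prop
  have hG : (∫ t in x..p, (t-x)*(A + B*(t-t0))) = ε^2/(2*c) := by
    rw [intervalIntegral.integral_eq_sub_of_hasDerivAt hderivG hintG]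
    have hpx : p - x = ε := by rw [hx]; ring
    rw [hA]
    field_simp
    ring
  -- step 3 : pointwise comparison and conclusion
  have hmono : (∫ t in x..p, (t-x)*(A + B*(t-t0))) ≤ ∫ t in x..p, (t-x)/(t*(1-t)) := by
    apply intervalIntegral.integral_mono_on hxp.le hintG hint
    intro t ht
    have htpos : 0 < t := lt_of_lt_of_le hx0 ht.1
    have ht1 : t < 1 := lt_of_le_of_lt ht.2 hp1
    have htan := tangent_ineq t t0 htpos ht1 ht00 ht01
    have htx : 0 ≤ t - x := by linarith [ht.1]
    have := mul_le_mul_of_nonneg_left htan htx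
    calc (t-x)*(A + B*(t-t0)) = (t-x)*(1/c + (2*t0-1)/c^2*(t-t0)) := by rw [hA, hB]
      _ ≤ (t-x)*(1/(t*(1-t))) := by rw [hcdef]; exact this
      _ = (t-x)/(t*(1-t)) := by ring
  have hfin : ε^2/(2*c) ≤ (x*log x + (1-x)*log (1-x)) - (x*log p + (1-x)*log (1-p)) := by
    rw [← hG, ← hKL]; exact hmono
  have hlogx : log (x/p) = log x - log p := log_div hx0.ne' hp0.ne'
  have hlogy : log ((1-x)/(1-p)) = log (1-x) - log (1-p) :=
    log_div (by linarith) (by linarith)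
  have hgoal : (p-ε)*log ((p-ε)/p) + (1-p+ε)*log ((1-p+ε)/(1-p))
      = (x*log x + (1-x)*log (1-x)) - (x*log p + (1-x)*log (1-p)) := by
    have h1x : (1:ℝ) - x = 1 - p + ε := by rw [hx]; ring
    rw [← hx, ← h1x, hlogx, hlogy]; ring
  rw [hgoal]
  calc ε^2 / (2*(p-ε/3)*(1-p+ε/3)) = ε^2/(2*c) := by
        rw [hcdef, ht0def]; ring_nf
    _ ≤ _ := hfin


lemma chernoff (N : ℕ) (p ε : ℝ) (hp1 : p < 1) (he0 : 0 < ε) (hep : ε < p) :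
    ∑ k ∈ Finset.range (N + 1),
      (if (k : ℝ) ≤ (N : ℝ) * (p - ε) then (N.choose k : ℝ) * p ^ k * (1 - p) ^ (N - k) else 0)
    ≤ Real.exp (-(N:ℝ) * ((p-ε)*log ((p-ε)/p) + (1-p+ε)*log ((1-p+ε)/(1-p)))) := by
  have hp0 : 0 < p := lt_trans he0 hep
  set x := p - ε with hx
  set q := 1 - p with hq
  set y := 1 - x with hy
  have hx0 : 0 < x := by simp [hx]; linarith
  have hq0 : 0 < q := by simp [hq]; linarith
  have hy0 : 0 < y := by simp only [hy, hx]; linarith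
  have hy1 : y = q + ε := by simp only [hy, hx, hq]; ring
  set s := x*q/(y*p) with hs
  have hs0 : 0 < s := by positivity
  have hs1 : s < 1 := by
    rw [hs, div_lt_one (by positivity)]
    nlinarith
  -- termwise bound
  have hterm : ∀ k ∈ Finset.range (N+1),
      (if (k : ℝ) ≤ (N : ℝ) * x then (N.choose k : ℝ) * p ^ k * q ^ (N - k) else 0)
      ≤ s ^ (-((N:ℝ)*x)) * ((N.choose k : ℝ) * (p*s) ^ k * q ^ (N - k)) := by
    intro k _
    split_ifs with hk
    · have h1 : (1:ℝ) ≤ s ^ ((k:ℝ) - (N:ℝ)*x) :=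
        Real.one_le_rpow_of_pos_of_le_one_of_nonpos hs0 hs1.le (by linarith)
      have h2 : s ^ ((k:ℝ) - (N:ℝ)*x) = s ^ (k:ℕ) * s ^ (-((N:ℝ)*x)) := by
        rw [sub_eq_add_neg, Real.rpow_add hs0, Real.rpow_natCast]
      have h3 : (0:ℝ) ≤ (N.choose k : ℝ) * p ^ k * q ^ (N - k) := by positivity
      calc (N.choose k : ℝ) * p ^ k * q ^ (N - k)
          = ((N.choose k : ℝ) * p ^ k * q ^ (N - k)) * 1 := by ring
        _ ≤ ((N.choose k : ℝ) * p ^ k * q ^ (N - k)) * (s ^ ((k:ℝ) - (N:ℝ)*x)) :=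
            mul_le_mul_of_nonneg_left h1 h3
        _ = s ^ (-((N:ℝ)*x)) * ((N.choose k : ℝ) * (p*s) ^ k * q ^ (N - k)) := by
            rw [h2, mul_pow]; ring
    · positivity
  calc ∑ k ∈ Finset.range (N + 1),
        (if (k : ℝ) ≤ (N : ℝ) * x then (N.choose k : ℝ) * p ^ k * q ^ (N - k) else 0)
      ≤ ∑ k ∈ Finset.range (N+1), s ^ (-((N:ℝ)*x)) * ((N.choose k : ℝ) * (p*s) ^ k * q ^ (N - k)) :=
        Finset.sum_le_sum hterm
    _ = s ^ (-((N:ℝ)*x)) * (p*s + q)^N := by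
        rw [← Finset.mul_sum, add_pow]
        congr 1
        apply Finset.sum_congr rfl
        intro k _
        ring
    _ = Real.exp (-(N:ℝ) * (x*log (x/p) + y*log (y/q))) := by
        have hps : p*s + q = q/y := by
          rw [hs]
          field_simp
          ring
        rw [hps, Real.rpow_def_of_pos hs0]
        rw [← Real.exp_log (show (0:ℝ) < q/y by positivity), ← Real.exp_nat_mul, ← Real.exp_add]
        congr 1
        rw [hs, Real.log_div (by positivity) (by positivity),
          Real.log_mul hx0.ne' hq0.ne', Real.log_mul hy0.ne' hp0.ne',
          Real.log_div hq0.ne' hy0.ne',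
          Real.log_div hx0.ne' hp0.ne', Real.log_div hy0.ne' hq0.ne']
        have : y = 1 - x := hy
        rw [this]
        ring
    _ = Real.exp (-(N:ℝ) * ((p-ε)*log ((p-ε)/p) + (1-p+ε)*log ((1-p+ε)/(1-p)))) := by
        have h1 : y = 1 - p + ε := by rw [hy, hx]; ring
        rw [h1, hq, hx]

/-- Massart's lower-tail inequality for the binomial distribution:
for `ε ∈ (0, p)`,
`Pr{K/N ≤ p - ε} ≤ exp(-Nε² / (2(p - ε/3)(1 - p + ε/3)))`. -/
theorem massart_lower_tail
    (N : ℕ) (hN : 0 < N) (p : ℝ) (hp : p ∈ Set.Ioo (0:ℝ) 1)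
    (ε : ℝ) (hε : ε ∈ Set.Ioo 0 p) :
    ∑ k ∈ Finset.range (N + 1),
      (if (k : ℝ) ≤ (N : ℝ) * (p - ε) then (N.choose k : ℝ) * p ^ k * (1 - p) ^ (N - k) else 0)
    ≤ Real.exp (- (N * ε ^ 2) / (2 * (p - ε / 3) * (1 - p + ε / 3))) := by
  obtain ⟨hp0, hp1⟩ := hp
  obtain ⟨he0, hep⟩ := hε
  calc ∑ k ∈ Finset.range (N + 1),
      (if (k : ℝ) ≤ (N : ℝ) * (p - ε) then (N.choose k : ℝ) * p ^ k * (1 - p) ^ (N - k) else 0)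
      ≤ Real.exp (-(N:ℝ) * ((p-ε)*Real.log ((p-ε)/p) + (1-p+ε)*Real.log ((1-p+ε)/(1-p)))) :=
        chernoff N p ε hp1 he0 hep
    _ ≤ Real.exp (- ((N:ℝ) * ε ^ 2) / (2 * (p - ε / 3) * (1 - p + ε / 3))) := by
        apply Real.exp_le_exp.2
        have hkl := kl_lb p ε hp1 he0 hep
        have hmul := mul_le_mul_of_nonneg_left hkl (Nat.cast_nonneg N : (0:ℝ) ≤ (N:ℝ))
        have heq : - ((N:ℝ) * ε ^ 2) / (2 * (p - ε / 3) * (1 - p + ε / 3))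
            = -((N:ℝ) * (ε^2 / (2*(p-ε/3)*(1-p+ε/3)))) := by ring
        rw [heq]
        linarith
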